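/- Let X be a Markov chain with finite state space S, and let x and y be any two states. Then for all integers t > 0, P_x(τ(y) = t) ≤ (1/t)·Σ_{z ∈ S} p*(x, z), where p*(x,z) = sup_{s ≥ 0} p^s(x,z) is the maximal transition probability from x to z. -/

import Mathlib

open Finset

/-- A (row-)stochastic transition matrix: the transition kernel of a Markov chain
on the finite state space `S`. -/
def IsStochastic {S : Type*} [Fintype S] (p : Matrix S S ℝ) : Prop :=
  (∀ a b, 0 ≤ p a b) ∧ ∀ a, ∑ b, p a b = 1

/-- The probability weight of a finite trajectory `z 0, z 1, …, z m` of the chain. -/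
noncomputable def pathWeight {S : Type*} (p : Matrix S S ℝ) {m : ℕ} (z : Fin (m + 1) → S) : ℝ :=
  ∏ i : Fin m, p (z i.castSucc) (z i.succ)

open scoped Classical in
/-- `P_x(A)` for an event `A` depending on the trajectory `X_0, X_1, …, X_m`
of the chain started at `x`. -/
noncomputable def eventProb {S : Type*} [Fintype S] (p : Matrix S S ℝ) (x : S) (m : ℕ)
    (A : (Fin (m + 1) → S) → Prop) : ℝ :=
  ∑ z : Fin (m + 1) → S, if z 0 = x ∧ A z then pathWeight p z else 0

/-- `P_x(τ(y) = t)`: the probability that the chain started at `x` first visits `y`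
exactly at time `t`. -/
noncomputable def hitProbEq {S : Type*} [Fintype S] (p : Matrix S S ℝ) (x y : S) (t : ℕ) : ℝ :=
  eventProb p x t fun z => z (Fin.last t) = y ∧ ∀ i : Fin (t + 1), (i : ℕ) < t → z i ≠ y

/-- `p*(x, y) = sup_{t ≥ 0} p^t(x, y)`, the maximal transition probability from `x` to `y`. -/
noncomputable def maxProb {S : Type*} [Fintype S] [DecidableEq S]
    (p : Matrix S S ℝ) (x y : S) : ℝ :=
  ⨆ t : ℕ, (p ^ t) x y

section helpers
variable {S : Type*} [Fintype S] {p : Matrix S S ℝ}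

lemma pathWeight_nonneg (hp : IsStochastic p) {m : ℕ} (z : Fin (m+1) → S) :
    0 ≤ pathWeight p z :=
  Finset.prod_nonneg fun _ _ => hp.1 _ _

lemma pathWeight_cons {m : ℕ} (x : S) (v : Fin (m+1) → S) :
    pathWeight p (Fin.cons x v) = p x (v 0) * pathWeight p v := by
  unfold pathWeight
  rw [Fin.prod_univ_succ]
  refine congrArg₂ (· * ·) (by simp) ?_
  refine Finset.prod_congr rfl fun i _ => ?_
  rw [← Fin.succ_castSucc]
  simp [Fin.cons_succ]

lemma pathWeight_snoc {m : ℕ} (v : Fin (m+1) → S) (a : S) :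
    pathWeight p (Fin.snoc v a) = pathWeight p v * p (v (Fin.last m)) a := by
  unfold pathWeight
  rw [Fin.prod_univ_castSucc]
  refine congrArg₂ (· * ·) ?_ ?_
  · refine Finset.prod_congr rfl fun i _ => ?_
    rw [Fin.succ_castSucc]
    rw [Fin.snoc_castSucc, Fin.snoc_castSucc]
  · rw [Fin.succ_last]
    simp [Fin.snoc_castSucc, Fin.snoc_last]

lemma eventProb_nonneg (hp : IsStochastic p) (x : S) (m : ℕ)
    (A : (Fin (m+1) → S) → Prop) : 0 ≤ eventProb p x m A := by
  classical
  refine Finset.sum_nonneg fun z _ => ?_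
  split_ifs
  · exact pathWeight_nonneg hp z
  · exact le_refl _

lemma eventProb_congr {x : S} {m : ℕ} {A B : (Fin (m+1) → S) → Prop}
    (h : ∀ z, z 0 = x → (A z ↔ B z)) : eventProb p x m A = eventProb p x m B := by
  classical
  refine Finset.sum_congr rfl fun z _ => ?_
  refine if_congr ?_ rfl rfl
  constructor
  · rintro ⟨h0, hA⟩; exact ⟨h0, (h z h0).1 hA⟩
  · rintro ⟨h0, hB⟩; exact ⟨h0, (h z h0).2 hB⟩

lemma eventProb_mono (hp : IsStochastic p) {x : S} {m : ℕ} {A B : (Fin (m+1) → S) → Prop}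
    (h : ∀ z, z 0 = x → A z → B z) : eventProb p x m A ≤ eventProb p x m B := by
  classical
  refine Finset.sum_le_sum fun z _ => ?_
  split_ifs with h1 h2
  · exact le_refl _
  · exact absurd ⟨h1.1, h z h1.1 h1.2⟩ h2
  · exact pathWeight_nonneg hp z
  · exact le_refl _

lemma eventProb_cons (x : S) (m : ℕ) (A : (Fin (m+2) → S) → Prop) :
    eventProb p x (m+1) A = ∑ b, p x b * eventProb p b m (fun v => A (Fin.cons x v)) := by
  classical
  unfold eventProb
  rw [← (Fin.consEquiv (fun _ : Fin (m+2) => S)).sum_comp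
    (fun z => if z 0 = x ∧ A z then pathWeight p z else 0), Fintype.sum_prod_type]
  have key : ∀ (a : S) (v : Fin (m+1) → S),
      (Fin.consEquiv fun _ : Fin (m+2) => S) (a, v) = Fin.cons a v := fun _ _ => rfl
  simp only [key, Fin.cons_zero, pathWeight_cons]
  rw [Finset.sum_eq_single x
    (fun b _ hb => Finset.sum_eq_zero fun v _ => if_neg (fun hc => hb hc.1))
    (fun h => absurd (Finset.mem_univ x) h)]
  simp only [Finset.mul_sum, mul_ite, mul_zero]
  rw [Finset.sum_comm]
  refine Finset.sum_congr rfl fun v _ => ?_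
  rw [Finset.sum_eq_single (v 0)
    (fun b _ hb => if_neg (fun hc => hb hc.1.symm))
    (fun h => absurd (Finset.mem_univ (v 0)) h)]
  exact if_congr (by tauto) rfl rfl

lemma eventProb_snoc (hp : IsStochastic p) (x : S) (m : ℕ) (A : (Fin (m+1) → S) → Prop) :
    eventProb p x (m+1) (fun z => A (fun i => z i.castSucc)) = eventProb p x m A := by
  classical
  unfold eventProb
  rw [← (Fin.snocEquiv (fun _ : Fin (m+2) => S)).sum_comp
    (fun z => if z 0 = x ∧ (fun z => A (fun i => z i.castSucc)) z then pathWeight p z else 0),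
    Fintype.sum_prod_type, Finset.sum_comm]
  refine Finset.sum_congr rfl fun v _ => ?_
  have hv : ∀ a : S, (Fin.snocEquiv (fun _ : Fin (m+2) => S)) (a, v) = Fin.snoc v a := by
    intro a; rfl
  simp only [hv]
  have h0 : ∀ a : S, (Fin.snoc v a : Fin (m+2) → S) 0 = v 0 := by
    intro a
    have : (0 : Fin (m+2)) = Fin.castSucc 0 := rfl
    rw [this, Fin.snoc_castSucc]
  have hres : ∀ a : S, (fun i : Fin (m+1) => (Fin.snoc v a : Fin (m+2) → S) i.castSucc) = v := by
    intro a; funext i; rw [Fin.snoc_castSucc]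
  simp only [h0, hres, pathWeight_snoc]
  split_ifs with h
  · rw [← Finset.mul_sum, hp.2, mul_one]
  · simp

end helpers

section more
variable {S : Type*} [Fintype S] {p : Matrix S S ℝ}

lemma eventProb_true (hp : IsStochastic p) : ∀ (m : ℕ) (x : S),
    eventProb p x m (fun _ => True) = 1 := by
  intro m
  induction m with
  | zero =>
    intro x
    classical
    unfold eventProb
    simp only [and_true]
    rw [← (Equiv.funUnique (Fin 1) S).symm.sum_comp
      (fun z => if z 0 = x then pathWeight p z else 0)]
    simp [pathWeight]
  | succ m ih =>
    intro x
    rw [eventProb_cons]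
    simp [ih, hp.2]

lemma eventProb_partition (x : S) (m : ℕ) (j : Fin (m+1)) (A : (Fin (m+1) → S) → Prop) :
    eventProb p x m A = ∑ c, eventProb p x m (fun z => z j = c ∧ A z) := by
  unfold eventProb
  rw [Finset.sum_comm]
  refine Finset.sum_congr rfl fun z _ => ?_
  by_cases h : z 0 = x ∧ A z
  · rw [if_pos h]
    exact ((Finset.sum_eq_single_of_mem (z j) (Finset.mem_univ _)
      (fun c _ hc => if_neg fun hcond => hc hcond.2.1.symm)).trans
      (if_pos ⟨h.1, rfl, h.2⟩)).symm
  · rw [if_neg h]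
    exact (Finset.sum_eq_zero fun c _ => if_neg fun hcond => h ⟨hcond.1, hcond.2.2⟩).symm

lemma eventProb_split [DecidableEq S] (hp : IsStochastic p) :
    ∀ (s u : ℕ) (x c : S) (B : (Fin (u+1) → S) → Prop),
    eventProb p x (u + s)
      (fun z => z ⟨s, by omega⟩ = c ∧ B (fun i => z ⟨s + (i : ℕ), by omega⟩))
      = (p ^ s) x c * eventProb p c u B := by
  intro s
  induction s with
  | zero =>
    intro u x c B
    rw [pow_zero, Matrix.one_apply]
    by_cases hxc : x = c
    · subst hxc
      rw [if_pos rfl, one_mul]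
      refine eventProb_congr fun z h0 => ?_
      have h1 : (⟨0, by omega⟩ : Fin (u + 0 + 1)) = 0 := rfl
      have h2 : (fun i : Fin (u+1) => z ⟨0 + (i:ℕ), by omega⟩) = z := by
        funext i; exact congrArg z (Fin.ext (Nat.zero_add _))
      rw [h1, h2, h0]
      tauto
    · rw [if_neg hxc, zero_mul]
      refine Finset.sum_eq_zero fun z _ => if_neg ?_
      rintro ⟨h0, h1, -⟩
      have : (⟨0, by omega⟩ : Fin (u + 0 + 1)) = 0 := rfl
      rw [this] at h1
      exact hxc (h0 ▸ h1 ▸ rfl)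
  | succ s ih =>
    intro u x c B
    show eventProb p x ((u+s)+1)
      (fun z => z ⟨s+1, by omega⟩ = c ∧ B (fun i => z ⟨s+1+(i:ℕ), by omega⟩))
      = (p ^ (s+1)) x c * eventProb p c u B
    rw [eventProb_cons]
    have step : ∀ b : S,
        eventProb p b (u+s) (fun v =>
          (fun z : Fin (u+s+2) → S =>
            z ⟨s+1, by omega⟩ = c ∧ B (fun i => z ⟨s+1+(i:ℕ), by omega⟩)) (Fin.cons x v))
        = (p ^ s) b c * eventProb p c u B := by
      intro b
      rw [← ih u b c B]
      refine eventProb_congr fun v _ => ?_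
      have e1 : (⟨s+1, by omega⟩ : Fin (u+s+2)) = Fin.succ ⟨s, by omega⟩ := rfl
      have e2 : ∀ i : Fin (u+1),
          (⟨s+1+(i:ℕ), by omega⟩ : Fin (u+s+2)) = Fin.succ ⟨s+(i:ℕ), by omega⟩ :=
        fun i => Fin.ext (by simp; omega)
      show ((Fin.cons x v : Fin (u+s+2) → S) ⟨s+1, by omega⟩ = c ∧
          B (fun i => (Fin.cons x v : Fin (u+s+2) → S) ⟨s+1+(i:ℕ), by omega⟩))
        ↔ (v ⟨s, by omega⟩ = c ∧ B (fun i => v ⟨s+(i:ℕ), by omega⟩))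
      have e3 : (fun i : Fin (u+1) => (Fin.cons x v : Fin (u+s+2) → S) ⟨s+1+(i:ℕ), by omega⟩)
          = (fun i : Fin (u+1) => v ⟨s+(i:ℕ), by omega⟩) := by
        funext i
        rw [e2 i, Fin.cons_succ]
      rw [e1, Fin.cons_succ, e3]
    calc ∑ b, p x b * eventProb p b (u+s) _
        = ∑ b, p x b * ((p ^ s) b c * eventProb p c u B) :=
          Finset.sum_congr rfl fun b _ => by rw [step b]
      _ = (p ^ (s+1)) x c * eventProb p c u B := by
          rw [pow_succ', Matrix.mul_apply, Finset.sum_mul]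
          exact Finset.sum_congr rfl fun b _ => by ring

end more

section more2
variable {S : Type*} [Fintype S] {p : Matrix S S ℝ}

lemma hitProbEq_nonneg (hp : IsStochastic p) (x y : S) (t : ℕ) :
    0 ≤ hitProbEq p x y t := eventProb_nonneg hp x t _

lemma hitProbEq_eventProb (hp : IsStochastic p) (c y : S) :
    ∀ {m u : ℕ} (hum : u ≤ m),
    hitProbEq p c y u = eventProb p c m
      (fun z => (∃ h : u < m + 1, z ⟨u, h⟩ = y) ∧ ∀ i : Fin (m + 1), (i : ℕ) < u → z i ≠ y) := by
  intro m
  induction m with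
  | zero =>
    intro u hum
    interval_cases u
    unfold hitProbEq
    refine eventProb_congr fun z _ => ?_
    constructor
    · rintro ⟨h1, -⟩; exact ⟨⟨Nat.zero_lt_one, h1⟩, fun i hi => absurd hi (by omega)⟩
    · rintro ⟨⟨h, h1⟩, -⟩; exact ⟨h1, fun i hi => absurd hi (by omega)⟩
  | succ m ih =>
    intro u hum
    by_cases hu : u = m + 1
    · subst hu
      unfold hitProbEq
      refine eventProb_congr fun z _ => ?_
      constructor
      · rintro ⟨h1, h2⟩
        exact ⟨⟨Nat.lt_succ_self _, h1⟩, h2⟩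
      · rintro ⟨⟨h, h1⟩, h2⟩
        exact ⟨h1, h2⟩
    · have hum' : u ≤ m := by omega
      rw [ih hum', ← eventProb_snoc hp c m
        (fun z => (∃ h : u < m + 1, z ⟨u, h⟩ = y) ∧ ∀ i : Fin (m + 1), (i : ℕ) < u → z i ≠ y)]
      refine eventProb_congr fun z _ => ?_
      constructor
      · rintro ⟨⟨h, h1⟩, h2⟩
        refine ⟨⟨by omega, ?_⟩, fun i hi => ?_⟩
        · have e : (⟨u, by omega⟩ : Fin (m+2)) = Fin.castSucc (⟨u, h⟩ : Fin (m+1)) :=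
            Fin.ext rfl
          exact (congrArg z e).trans h1
        · intro hzy
          have e : Fin.castSucc (⟨(i : ℕ), by omega⟩ : Fin (m+1)) = i := Fin.ext rfl
          exact h2 ⟨(i : ℕ), by omega⟩ hi ((congrArg z e).trans hzy)
      · rintro ⟨⟨h, h1⟩, h2⟩
        refine ⟨⟨by omega, ?_⟩, fun i hi => ?_⟩
        · have e : Fin.castSucc (⟨u, by omega⟩ : Fin (m+1)) = (⟨u, h⟩ : Fin (m+2)) :=
            Fin.ext rfl
          exact (congrArg z e).trans h1
        · exact h2 i.castSucc (show ((i.castSucc : Fin (m+2)) : ℕ) < u from hi)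

lemma sum_range_ite_le (f : ℕ → Prop) (D : ∀ u, Decidable (f u)) (t : ℕ) (w : ℝ) (hw : 0 ≤ w)
    (hdisj : ∀ u v, f u → f v → u = v) :
    (∑ u ∈ Finset.range t, @ite ℝ (f u) (D u) w 0) ≤ w := by
  classical
  by_cases hex : ∃ u ∈ Finset.range t, f u
  · obtain ⟨u0, hu0, hf⟩ := hex
    rw [Finset.sum_eq_single_of_mem u0 hu0
      (fun b _ hb => if_neg (fun hfb => hb (hdisj b u0 hfb hf))), if_pos hf]
  · rw [Finset.sum_eq_zero (fun u hu => if_neg (fun hfu => hex ⟨u, hu, hfu⟩))]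
    exact hw

lemma sum_hit_le_one (hp : IsStochastic p) (c y : S) (t : ℕ) (ht : 0 < t) :
    ∑ u ∈ Finset.range t, hitProbEq p c y u ≤ 1 := by
  have hconv : ∀ u ∈ Finset.range t, hitProbEq p c y u
      = eventProb p c (t-1) (fun z => (∃ h : u < (t-1) + 1, z ⟨u, h⟩ = y) ∧
          ∀ i : Fin ((t-1) + 1), (i : ℕ) < u → z i ≠ y) := by
    intro u hu
    exact hitProbEq_eventProb hp c y (by simp at hu; omega)
  rw [Finset.sum_congr rfl hconv]
  have hle : (∑ u ∈ Finset.range t,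
      eventProb p c (t-1) (fun z => (∃ h : u < (t-1) + 1, z ⟨u, h⟩ = y) ∧
        ∀ i : Fin ((t-1) + 1), (i : ℕ) < u → z i ≠ y))
      ≤ eventProb p c (t-1) (fun _ => True) := by
    unfold eventProb
    rw [Finset.sum_comm]
    refine Finset.sum_le_sum fun z _ => ?_
    by_cases hz : z 0 = c
    · refine le_trans (sum_range_ite_le _ _ t _ (pathWeight_nonneg hp z) ?_)
        (le_of_eq (if_pos ⟨hz, trivial⟩).symm)
      rintro u v ⟨-, ⟨hu, hu1⟩, hu2⟩ ⟨-, ⟨hv, hv1⟩, hv2⟩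
      by_contra hne
      rcases Nat.lt_or_ge u v with hlt | hge
      · exact hv2 ⟨u, by omega⟩ hlt hu1
      · exact hu2 ⟨v, by omega⟩ (show v < u by omega) hv1
    · refine le_trans (le_of_eq (Finset.sum_eq_zero fun u _ => if_neg (fun h => hz h.1))) ?_
      rw [if_neg (fun h => hz h.1)]
  exact hle.trans (le_of_eq (eventProb_true hp (t-1) c))

end more2

section maxprob
variable {S : Type*} [Fintype S] [DecidableEq S] {p : Matrix S S ℝ}

lemma isStochastic_pow (hp : IsStochastic p) (n : ℕ) : IsStochastic (p ^ n) := by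
  induction n with
  | zero =>
    rw [pow_zero]
    constructor
    · intro a b
      rw [Matrix.one_apply]
      split_ifs <;> norm_num
    · intro a
      classical
      simp [Matrix.one_apply]
  | succ n ih =>
    rw [pow_succ]
    constructor
    · intro a b
      rw [Matrix.mul_apply]
      exact Finset.sum_nonneg fun c _ => mul_nonneg (ih.1 a c) (hp.1 c b)
    · intro a
      simp only [Matrix.mul_apply]
      rw [Finset.sum_comm]
      calc ∑ c, ∑ b, (p ^ n) a c * p c b = ∑ c, (p ^ n) a c * ∑ b, p c b := by
            exact Finset.sum_congr rfl fun c _ => (Finset.mul_sum _ _ _).symm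
        _ = 1 := by simp [hp.2, ih.2 a]

lemma pow_apply_le_one (hp : IsStochastic p) (n : ℕ) (a b : S) : (p ^ n) a b ≤ 1 := by
  have h := isStochastic_pow hp n
  calc (p ^ n) a b ≤ ∑ c, (p ^ n) a c :=
        Finset.single_le_sum (fun c _ => h.1 a c) (Finset.mem_univ b)
    _ = 1 := h.2 a

lemma le_maxProb (hp : IsStochastic p) (s : ℕ) (x c : S) :
    (p ^ s) x c ≤ maxProb p x c :=
  le_ciSup (f := fun t : ℕ => (p ^ t) x c)
    ⟨1, by rintro r ⟨n, rfl⟩; exact pow_apply_le_one hp n x c⟩ s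

lemma maxProb_nonneg (hp : IsStochastic p) (x c : S) :
    0 ≤ maxProb p x c :=
  le_trans ((isStochastic_pow hp 0).1 x c) (le_maxProb hp 0 x c)

end maxprob

section keysec
variable {S : Type*} [Fintype S] [DecidableEq S] {p : Matrix S S ℝ}

lemma key (hp : IsStochastic p) (x y : S) (s u : ℕ) :
    hitProbEq p x y (u + s) ≤ ∑ c, (p ^ s) x c * hitProbEq p c y u := by
  unfold hitProbEq
  rw [eventProb_partition x (u+s) ⟨s, by omega⟩]
  refine Finset.sum_le_sum fun c _ => ?_
  rw [← eventProb_split hp s u x c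
    (fun v => v (Fin.last u) = y ∧ ∀ i : Fin (u+1), (i : ℕ) < u → v i ≠ y)]
  refine eventProb_mono hp fun z _ => ?_
  rintro ⟨hzs, hlast, hno⟩
  refine ⟨hzs, ?_, fun i hi => ?_⟩
  · have e : (⟨s + ((Fin.last u : Fin (u+1)) : ℕ), by omega⟩ : Fin (u+s+1))
        = Fin.last (u+s) := Fin.ext (by simp [Fin.last]; omega)
    exact (congrArg z e).trans hlast
  · exact hno ⟨s + (i : ℕ), by omega⟩ (show s + (i : ℕ) < u + s by omega)

end keysec


/-- Lemma 8: `P_x(τ(y) = t) ≤ (1/t) Σ_z p*(x, z)` for every `t > 0`. -/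
theorem hitProbEq_le_sum_maxProb {S : Type*} [Fintype S] [DecidableEq S]
    (p : Matrix S S ℝ) (hp : IsStochastic p) (x y : S) (t : ℕ) (ht : 0 < t) :
    hitProbEq p x y t ≤ (1 / t) * ∑ z, maxProb p x z := by
  have step1 : (t : ℝ) * hitProbEq p x y t ≤ ∑ c, maxProb p x c := by
    have h0 : (t : ℝ) * hitProbEq p x y t = ∑ s ∈ Finset.Icc 1 t, hitProbEq p x y t := by
      rw [Finset.sum_const, Nat.card_Icc]
      simp [nsmul_eq_mul]
    rw [h0]
    calc ∑ _s ∈ Finset.Icc 1 t, hitProbEq p x y t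
        ≤ ∑ s ∈ Finset.Icc 1 t, ∑ c, (p ^ s) x c * hitProbEq p c y (t - s) := by
          refine Finset.sum_le_sum fun s hs => ?_
          have hkey := key hp x y s (t - s)
          rw [show (t - s) + s = t by (have := Finset.mem_Icc.mp hs; omega)] at hkey
          exact hkey
      _ ≤ ∑ s ∈ Finset.Icc 1 t, ∑ c, maxProb p x c * hitProbEq p c y (t - s) := by
          refine Finset.sum_le_sum fun s _ => Finset.sum_le_sum fun c _ => ?_
          exact mul_le_mul_of_nonneg_right (le_maxProb hp s x c) (hitProbEq_nonneg hp c y _)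
      _ = ∑ c, maxProb p x c * ∑ s ∈ Finset.Icc 1 t, hitProbEq p c y (t - s) := by
          rw [Finset.sum_comm]
          exact Finset.sum_congr rfl fun c _ => (Finset.mul_sum _ _ _).symm
      _ ≤ ∑ c, maxProb p x c * 1 := by
          refine Finset.sum_le_sum fun c _ =>
            mul_le_mul_of_nonneg_left ?_ (maxProb_nonneg hp x c)
          have hre : ∑ s ∈ Finset.Icc 1 t, hitProbEq p c y (t - s)
              = ∑ u ∈ Finset.range t, hitProbEq p c y u := by
            refine Finset.sum_nbij' (fun s => t - s) (fun u => t - u)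
              (fun s hs => ?_) (fun u hu => ?_) (fun s hs => ?_) (fun u hu => ?_)
              (fun s hs => rfl)
            · simp at hs ⊢; omega
            · simp at hu ⊢; omega
            · show t - (t - s) = s; simp at hs; omega
            · show t - (t - u) = u; simp at hu; omega
          rw [hre]
          exact sum_hit_le_one hp c y t ht
      _ = ∑ c, maxProb p x c := by simp
  have ht' : (0 : ℝ) < t := by exact_mod_cast ht
  rw [one_div, inv_mul_eq_div, le_div_iff₀ ht']
  linarith [step1]
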